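/- Combining the previous two results: if A is a bounded self-adjoint D-local operator, ψ, φ ∈ L²(ℝ³) orthonormal with φ vanishing a.e. on D, then ⟨Ψ, (A⊗1 + 1⊗A)Ψ⟩ = ⟨ψ, Aψ⟩ for Ψ = 2^{-1/2}(ψ⊗φ ± φ⊗ψ). -/

import Mathlib

open MeasureTheory

noncomputable abbrev H3 : Type :=
  Lp ℂ 2 (volume : Measure (EuclideanSpace ℝ (Fin 3)))

/-- Cluster separability: for a bounded self-adjoint `D`-local operator `A`
(`A` and `A*` annihilate all `L²` functions vanishing a.e. on the open set `D`),
orthonormal `ψ, φ` with `φ` vanishing a.e. on `D`, the expectation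
`⟨Ψ, (A⊗1 + 1⊗A)Ψ⟩` (written out via the tensor-product inner product) in
`Ψ = 2^{-1/2}(ψ⊗φ ± φ⊗ψ)` equals `⟨ψ, Aψ⟩`. -/
theorem cluster_separability_operator
    (D : Set (EuclideanSpace ℝ (Fin 3))) (hD : IsOpen D)
    (A : H3 →L[ℂ] H3) (hA : IsSelfAdjoint A)
    (hlocal : ∀ f : H3, (∀ᵐ x ∂(volume : Measure (EuclideanSpace ℝ (Fin 3))),
        x ∈ D → f x = 0) →
      A f = 0 ∧ (ContinuousLinearMap.adjoint A) f = 0)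
    (ψ φ : H3) (hψ : ‖ψ‖ = 1) (hφ : ‖φ‖ = 1) (horth : (inner ℂ ψ φ : ℂ) = 0)
    (hφD : ∀ᵐ x ∂(volume : Measure (EuclideanSpace ℝ (Fin 3))), x ∈ D → φ x = 0)
    (s : ℂ) (hs : s = 1 ∨ s = -1) :
    (1 / 2 : ℂ) *
      (((inner ℂ ψ (A ψ) : ℂ) * inner ℂ φ φ + s * (inner ℂ ψ (A φ) : ℂ) * inner ℂ φ ψ
          + s * (inner ℂ φ (A ψ) : ℂ) * inner ℂ ψ φ + (inner ℂ φ (A φ) : ℂ) * inner ℂ ψ ψ)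
        + ((inner ℂ ψ ψ : ℂ) * inner ℂ φ (A φ) + s * (inner ℂ ψ φ : ℂ) * inner ℂ φ (A ψ)
          + s * (inner ℂ φ ψ : ℂ) * inner ℂ ψ (A φ) + (inner ℂ φ φ : ℂ) * inner ℂ ψ (A ψ)))
      = (inner ℂ ψ (A ψ) : ℂ) := by
  obtain ⟨hAφ, hAadφ⟩ := hlocal φ hφD
  have hφψ : (inner ℂ φ ψ : ℂ) = 0 := by
    rw [← inner_conj_symm, horth, map_zero]
  have hφφ : (inner ℂ φ φ : ℂ) = 1 := by
    rw [inner_self_eq_norm_sq_to_K, hφ]; norm_num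
  have hψψ : (inner ℂ ψ ψ : ℂ) = 1 := by
    rw [inner_self_eq_norm_sq_to_K, hψ]; norm_num
  have hφAψ : (inner ℂ φ (A ψ) : ℂ) = 0 := by
    rw [← ContinuousLinearMap.adjoint_inner_left, hAadφ, inner_zero_left]
  rw [hAφ, hφAψ, hφψ, horth, hφφ, hψψ]
  simp
  ring
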